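/- If C ⊆ 2^X has VC dimension d, then for every finite A ⊆ X, the number of distinct traces |{c ∩ A : c ∈ C}| is at most Φ_d(|A|) = ∑_{i=0}^{d} C(|A|, i). -/

import Mathlib

open Set

def traceOn {X : Type*} (C : Set (Set X)) (A : Set X) : Set (Set X) :=
  {s | ∃ c ∈ C, s = c ∩ A}

def Shatters {X : Type*} (C : Set (Set X)) (A : Set X) : Prop :=
  ∀ s ⊆ A, ∃ c ∈ C, c ∩ A = s

def VCDimEq {X : Type*} (C : Set (Set X)) (d : ℕ) : Prop :=
  (∃ A : Set X, A.Finite ∧ A.ncard = d ∧ Shatters C A) ∧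
    ∀ A : Set X, A.Finite → Shatters C A → A.ncard ≤ d

def Phi (d n : ℕ) : ℕ := if d ≤ n then ∑ i ∈ Finset.range (d + 1), n.choose i else 2 ^ n

/-- Sauer's Lemma: if C has VC dimension d, then for every finite A,
the number of traces of C on A is at most Φ_d(|A|). -/
theorem sauer_lemma {X : Type*} (C : Set (Set X)) (d : ℕ) (hVC : VCDimEq C d)
    (A : Set X) (hA : A.Finite) : (traceOn C A).ncard ≤ Phi d A.ncard := by
  classical
  haveI : Fintype A := hA.fintype
  set n := A.ncard with hn
  have hcard : Fintype.card A = n := by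
    rw [hn, ← Nat.card_coe_set_eq, Nat.card_eq_fintype_card]
  -- map traces to finsets of the subtype
  let f : Set X → Finset A := fun s => (Subtype.val ⁻¹' s).toFinset
  have hfinj : ∀ s ∈ traceOn C A, ∀ t ∈ traceOn C A, f s = f t → s = t := by
    rintro s ⟨c, hc, rfl⟩ t ⟨c', hc', rfl⟩ hst
    have h1 : Subtype.val ⁻¹' (c ∩ A) = (Subtype.val ⁻¹' (c' ∩ A) : Set A) := by
      ext x; have hx := congrArg (x ∈ ·) hst; simp only [f, Set.mem_toFinset] at hx; simpa using hx
    have h2 := congrArg (fun (u : Set A) => (Subtype.val : A → X) '' u) h1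
    simpa [Set.image_preimage_eq_inter_range, Subtype.range_coe,
      Set.inter_assoc] using h2
  have htrfin : (traceOn C A).Finite := by
    have hsub : traceOn C A ⊆ {s | s ⊆ A} := by
      rintro s ⟨c, hc, rfl⟩; exact Set.inter_subset_right
    exact (Set.Finite.finite_subsets hA).subset hsub
  let 𝒜 : Finset (Finset A) := (htrfin.image f).toFinset
  have hcard𝒜 : (traceOn C A).ncard = 𝒜.card := by
    rw [← Set.ncard_coe_finset]
    simp only [𝒜, Set.Finite.coe_toFinset]
    exact (Set.ncard_image_of_injOn fun s hs t ht h => hfinj s hs t ht h).symm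
  -- vcDim bound
  have hvc : 𝒜.vcDim ≤ d := by
    apply Finset.sup_le
    intro s hs
    rw [Finset.mem_shatterer] at hs
    set B : Set X := Subtype.val '' (s : Set A) with hB
    have hBA : B ⊆ A := by rintro x ⟨a, _, rfl⟩; exact a.2
    have hBfin : B.Finite := (s : Set A).toFinite.image _
    have hBcard : B.ncard = s.card := by
      rw [hB, Set.ncard_image_of_injective _ Subtype.val_injective, Set.ncard_coe_finset]
    have hshat : Shatters C B := by
      intro t ht
      set t' : Finset A := s.filter (fun a => (a : X) ∈ t) with ht'
      have hts : t' ⊆ s := Finset.filter_subset _ _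
      obtain ⟨u, hu, hsu⟩ := hs hts
      have hu' : u ∈ f '' traceOn C A := by simpa [𝒜] using hu
      obtain ⟨c, ⟨c₀, hc₀, rfl⟩, rfl⟩ := hu'
      refine ⟨c₀, hc₀, ?_⟩
      ext x
      constructor
      · rintro ⟨hxc, a, ha, rfl⟩
        have hmem : a ∈ s ∩ f (c₀ ∩ A) := Finset.mem_inter.2 ⟨ha, by simp only [f, Set.mem_toFinset]; simp [hxc, a.2]⟩
        rw [hsu] at hmem
        exact (Finset.mem_filter.1 hmem).2
      · intro hxt
        obtain ⟨a, ha, rfl⟩ := ht hxt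
        have ha' : a ∈ t' := Finset.mem_filter.2 ⟨ha, hxt⟩
        rw [← hsu] at ha'
        have hc : (a : X) ∈ c₀ ∩ A := by
          have := (Finset.mem_inter.1 ha').2
          simp only [f, Set.mem_toFinset] at this; simpa using this
        exact ⟨hc.1, ⟨a, ha, rfl⟩⟩
    have := hVC.2 B hBfin hshat
    rwa [hBcard] at this
  rw [hcard𝒜]
  by_cases hdn : d ≤ n
  · rw [Phi, if_pos hdn]
    calc 𝒜.card ≤ 𝒜.shatterer.card := Finset.card_le_card_shatterer 𝒜
      _ ≤ ∑ k ∈ Finset.Iic 𝒜.vcDim, (Fintype.card A).choose k :=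
        Finset.card_shatterer_le_sum_vcDim
      _ ≤ ∑ i ∈ Finset.range (d + 1), n.choose i := by
        rw [hcard]
        refine Finset.sum_le_sum_of_subset ?_
        intro k hk
        simp only [Finset.mem_Iic] at hk
        simp only [Finset.mem_range]
        omega
  · rw [Phi, if_neg hdn]
    calc 𝒜.card ≤ Fintype.card (Finset A) := Finset.card_le_univ 𝒜
      _ = 2 ^ n := by rw [Fintype.card_finset, hcard]
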